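/- Let w₂ ∈ ℝ^L satisfy the energy budget P(w₂) ≤ P̂ and maximize the Fisher information subject to the energy budget, i.e. J(w) ≤ J(w₂) for every w ∈ ℝ^L with P(w) ≤ P̂. If moreover J(w₂) > 0, then w₂ solves the information constrained problem with threshold J̌ = J(w₂): for every w ∈ ℝ^L with J(w) ≥ J(w₂) one has P(w₂) ≤ P(w). (First direction of Proposition 2.) -/

import Mathlib

open Matrix BigOperators

/-- first direction of Proposition 2: a maximizer of the Fisher
information subject to the energy budget solves the information constrained
problem with threshold `J w₂`. -/
theorem energy_constrained_solves_information_constrained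
    {L : ℕ} (hL : 0 < L)
    (ΩJN ΩJD ΩT : Matrix (Fin L) (Fin L) ℝ)
    (hJN : ΩJN.PosSemidef) (hJD : ΩJD.PosSemidef) (hT : ΩT.PosSemidef)
    (ξsq : ℝ) (hξ : 0 < ξsq)
    (c : Fin L → ℝ) (hc : ∀ l, 0 ≤ c l)
    (Phat : ℝ)
    (J P : (Fin L → ℝ) → ℝ)
    (hJ : ∀ w, J w = (w ⬝ᵥ ΩJN.mulVec w) / (w ⬝ᵥ ΩJD.mulVec w + ξsq))
    (hP : ∀ w, P w = w ⬝ᵥ ΩT.mulVec w + ∑ l, if w l = 0 then 0 else c l)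
    (w₂ : Fin L → ℝ)
    (hfeas : P w₂ ≤ Phat)
    (hopt : ∀ w, P w ≤ Phat → J w ≤ J w₂)
    (hJpos : 0 < J w₂) :
    ∀ w, J w₂ ≤ J w → P w₂ ≤ P w := by
  intro w hw
  by_contra hcon
  push_neg at hcon
  set a := w ⬝ᵥ ΩJN.mulVec w with ha
  set b := w ⬝ᵥ ΩJD.mulVec w with hb
  have hb0 : 0 ≤ b := by
    have := hJD.dotProduct_mulVec_nonneg w; simpa using this
  have hden : 0 < b + ξsq := by linarith
  have hJw : J w = a / (b + ξsq) := hJ w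
  have hJwpos : 0 < J w := lt_of_lt_of_le hJpos hw
  have hapos : 0 < a := by
    by_contra h
    push_neg at h
    have h2 : a / (b + ξsq) ≤ 0 := div_nonpos_of_nonpos_of_nonneg h hden.le
    rw [← hJw] at h2
    linarith
  set q := w ⬝ᵥ ΩT.mulVec w with hqdef
  have hq0 : 0 ≤ q := by
    have := hT.dotProduct_mulVec_nonneg w; simpa using this
  have hPwlt : P w < Phat := lt_of_lt_of_le hcon hfeas
  obtain ⟨s, hs⟩ : ∃ s : ℝ, s = 1 + (Phat - P w) / (q + 1) := ⟨_, rfl⟩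
  have hq1 : (0:ℝ) < q + 1 := by linarith
  have hs1 : 1 < s := by
    have : 0 < (Phat - P w) / (q + 1) := div_pos (by linarith) hq1
    linarith
  set t := Real.sqrt s with ht
  have hts : t ^ 2 = s := Real.sq_sqrt (by linarith)
  have ht0 : t ≠ 0 := by
    intro h0
    rw [h0] at hts
    nlinarith
  have key : ∀ M : Matrix (Fin L) (Fin L) ℝ,
      (t • w) ⬝ᵥ M.mulVec (t • w) = t ^ 2 * (w ⬝ᵥ M.mulVec w) := by
    intro M
    rw [Matrix.mulVec_smul, smul_dotProduct, dotProduct_smul, smul_eq_mul, smul_eq_mul]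
    ring
  have hcard : (∑ l, if (t • w) l = 0 then 0 else c l) = ∑ l, if w l = 0 then 0 else c l := by
    apply Finset.sum_congr rfl
    intro l _
    have : (t • w) l = t * w l := rfl
    rw [this]
    by_cases hwl : w l = 0
    · simp [hwl]
    · rw [if_neg hwl, if_neg (mul_ne_zero ht0 hwl)]
  have hPt : P (t • w) = s * q + (P w - q) := by
    rw [hP (t • w), key, hts, hcard, hP w]
    ring
  have hPtle : P (t • w) ≤ Phat := by
    rw [hPt]
    have hfrac : q / (q + 1) ≤ 1 := by
      rw [div_le_one hq1]; linarith
    have : (s - 1) * q = (Phat - P w) * (q / (q + 1)) := by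
      rw [hs]; field_simp; ring
    linarith [mul_le_of_le_one_right (le_of_lt (by linarith : (0:ℝ) < Phat - P w)) hfrac, this]
  have hJt : J (t • w) = (s * a) / (s * b + ξsq) := by
    rw [hJ (t • w), key, key, hts]
  have hdens : 0 < s * b + ξsq := by nlinarith
  have hlt : a / (b + ξsq) < (s * a) / (s * b + ξsq) := by
    rw [div_lt_div_iff₀ hden hdens]
    nlinarith [mul_pos (mul_pos (sub_pos.mpr hs1) hapos) hξ]
  have := hopt (t • w) hPtle
  rw [hJt] at this
  rw [hJw] at hw
  linarith
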